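/- Let hᵢ : ℝⁿ → ℝ be differentiable convex functions. A point (y₁*,…,y_m*) with Σᵢ yᵢ* = 0 is optimal for min Σᵢ hᵢ*(yᵢ) subject to Σᵢ yᵢ = 0 (with each hᵢ* differentiable at yᵢ*) if and only if ∇h₁*(y₁*) = ⋯ = ∇h_m*(y_m*); and in that case the common value s* := ∇hᵢ*(yᵢ*) is an optimal solution of the primal consensus problem min_s Σᵢ hᵢ(s). -/

import Mathlib

open Filter Set Topology RealInnerProductSpace

noncomputable def fenchel {n : ℕ} (f : EuclideanSpace ℝ (Fin n) → ℝ)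
    (y : EuclideanSpace ℝ (Fin n)) : ℝ :=
  sSup (Set.range fun x => ⟪y, x⟫ - f x)

def Coercive1 {n : ℕ} (f : EuclideanSpace ℝ (Fin n) → ℝ) : Prop :=
  Tendsto (fun x => f x / ‖x‖) (Filter.comap norm Filter.atTop) Filter.atTop

variable {n : ℕ}
local notation "E" => EuclideanSpace ℝ (Fin n)

lemma lineDeriv_of_grad {F : E → ℝ} {gF y : E} (hF : HasGradientAt F gF y) (v : E) :
    HasDerivAt (fun t : ℝ => F (y + t • v)) ⟪gF, v⟫ 0 := by
  have hc : HasDerivAt (fun t : ℝ => y + t • v) v 0 := by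
    simpa using ((hasDerivAt_id (0:ℝ)).smul_const v).const_add y
  have h2 : HasFDerivAt F (InnerProductSpace.toDual ℝ _ gF) ((fun t : ℝ => y + t • v) 0) := by
    simpa using hF.hasFDerivAt
  have h3 := h2.comp_hasDerivAt (0:ℝ) hc
  simp only [InnerProductSpace.toDual_apply_apply] at h3
  exact h3

lemma exists_max {f : E → ℝ} (hf : Continuous f) (hc : Coercive1 f) (y : E) :
    ∃ x₀ : E, ∀ x, ⟪y, x⟫ - f x ≤ ⟪y, x₀⟫ - f x₀ := by
  set C := ‖y‖ + |f 0| + 1 with hC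
  have hev : ∀ᶠ x in Filter.comap norm Filter.atTop, C ≤ f x / ‖x‖ :=
    hc.eventually (eventually_ge_atTop C)
  rw [eventually_comap] at hev
  obtain ⟨R, hR⟩ := eventually_atTop.1 hev
  set R' := max R 1 with hR'
  have hout : ∀ x : E, R' ≤ ‖x‖ → ⟪y, x⟫ - f x ≤ ⟪y, (0:E)⟫ - f 0 := by
    intro x hx
    have h1 : (1:ℝ) ≤ ‖x‖ := le_trans (le_max_right _ _) hx
    have hpos : (0:ℝ) < ‖x‖ := lt_of_lt_of_le one_pos h1
    have h2 : C ≤ f x / ‖x‖ := hR ‖x‖ (le_trans (le_max_left _ _) hx) x rfl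
    have h3 : C * ‖x‖ ≤ f x := by
      rw [le_div_iff₀ hpos] at h2; linarith
    have h4 : ⟪y, x⟫ ≤ ‖y‖ * ‖x‖ := real_inner_le_norm y x
    have h5 : ⟪y, (0:E)⟫ = 0 := inner_zero_right y
    rw [h5]
    have : (|f 0| + 1) * ‖x‖ ≥ |f 0| + 1 := by nlinarith [abs_nonneg (f 0)]
    nlinarith [abs_nonneg (f 0), le_abs_self (f 0), neg_abs_le (f 0)]
  have hK : IsCompact (Metric.closedBall (0:E) R') := isCompact_closedBall 0 R'
  have h0K : (0:E) ∈ Metric.closedBall (0:E) R' := by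
    simp [Metric.mem_closedBall]
    positivity
  have hcont : Continuous fun x : E => ⟪y, x⟫ - f x :=
    (continuous_const.inner continuous_id).sub hf
  obtain ⟨x₀, hx₀K, hmax⟩ := hK.exists_isMaxOn ⟨0, h0K⟩ hcont.continuousOn
  refine ⟨x₀, fun x => ?_⟩
  by_cases hx : ‖x‖ ≤ R'
  · exact hmax (by simpa [Metric.mem_closedBall] using hx)
  · exact le_trans (hout x (le_of_lt (not_le.1 hx))) (hmax h0K)

lemma fenchel_bddAbove {f : E → ℝ} (hf : Continuous f) (hc : Coercive1 f) (y : E) :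
    BddAbove (Set.range fun x => ⟪y, x⟫ - f x) := by
  obtain ⟨x₀, hx₀⟩ := exists_max hf hc y
  exact ⟨⟪y, x₀⟫ - f x₀, by rintro a ⟨x, rfl⟩; exact hx₀ x⟩

lemma le_fenchel {f : E → ℝ} (hf : Continuous f) (hc : Coercive1 f) (y x : E) :
    ⟪y, x⟫ - f x ≤ fenchel f y :=
  le_csSup (fenchel_bddAbove hf hc y) (Set.mem_range_self x)

lemma fenchel_eq_max {f : E → ℝ} (hf : Continuous f) (hc : Coercive1 f) {y x₀ : E}
    (hx₀ : ∀ x, ⟪y, x⟫ - f x ≤ ⟪y, x₀⟫ - f x₀) :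
    fenchel f y = ⟪y, x₀⟫ - f x₀ := by
  refine le_antisymm (csSup_le (Set.range_nonempty _) ?_) (le_fenchel hf hc y x₀)
  rintro a ⟨x, rfl⟩; exact hx₀ x

lemma fenchel_convexOn {f : E → ℝ} (hf : Continuous f) (hc : Coercive1 f) :
    ConvexOn ℝ Set.univ (fenchel f) := by
  refine ⟨convex_univ, fun a _ b _ la lb hla hlb hab => ?_⟩
  refine csSup_le (Set.range_nonempty _) ?_
  rintro r ⟨x, rfl⟩
  have heq : ⟪la • a + lb • b, x⟫ - f x = la * (⟪a, x⟫ - f x) + lb * (⟪b, x⟫ - f x) := by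
    rw [inner_add_left, real_inner_smul_left, real_inner_smul_left]
    linear_combination f x * hab
  show ⟪la • a + lb • b, x⟫ - f x ≤ _
  rw [heq, smul_eq_mul, smul_eq_mul]
  exact add_le_add (mul_le_mul_of_nonneg_left (le_fenchel hf hc a x) hla)
    (mul_le_mul_of_nonneg_left (le_fenchel hf hc b x) hlb)

/-- If a convex-ish function has a global subgradient s at y and a gradient G at y, then G = s. -/
lemma grad_eq_of_subgrad {F : E → ℝ} {G s y : E} (hG : HasGradientAt F G y)
    (hs : ∀ y', F y + ⟪y' - y, s⟫ ≤ F y') : G = s := by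
  have key : ∀ v : E, ⟪G, v⟫ - ⟪s, v⟫ = 0 := by
    intro v
    have hψ : HasDerivAt (fun t : ℝ => F (y + t • v) - t * ⟪s, v⟫) (⟪G, v⟫ - ⟪s, v⟫) 0 := by
      have h1 := lineDeriv_of_grad hG v
      have h2 : HasDerivAt (fun t : ℝ => t * ⟪s, v⟫) ⟪s, v⟫ 0 := by
        simpa using (hasDerivAt_id (0:ℝ)).mul_const ⟪s, v⟫
      exact h1.sub h2
    have hmin : IsLocalMin (fun t : ℝ => F (y + t • v) - t * ⟪s, v⟫) 0 := by
      refine Filter.Eventually.of_forall fun t => ?_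
      have := hs (y + t • v)
      simp only [add_sub_cancel_left] at this
      have hin : ⟪t • v, s⟫ = t * ⟪s, v⟫ := by
        rw [real_inner_smul_left, real_inner_comm]
      simp only [zero_smul, add_zero, zero_mul, sub_zero]
      linarith [this, hin ▸ this]
    exact hmin.hasDerivAt_eq_zero hψ
  have : ⟪G - s, G - s⟫ = 0 := by
    rw [inner_sub_left]; exact key (G - s)
  have := inner_self_eq_zero.1 this
  exact sub_eq_zero.1 this

/-- First-order condition for convex functions. -/
lemma convex_grad_ineq {F : E → ℝ} (hF : ConvexOn ℝ Set.univ F) {G x : E}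
    (hG : HasGradientAt F G x) (y : E) : F x + ⟪G, y - x⟫ ≤ F y := by
  set v := y - x with hv
  have hd : HasDerivAt (fun t : ℝ => F (x + t • v)) ⟪G, v⟫ 0 := lineDeriv_of_grad hG v
  have hslope : Tendsto (slope (fun t : ℝ => F (x + t • v)) 0) (𝓝[>] 0) (𝓝 ⟪G, v⟫) :=
    (hasDerivAt_iff_tendsto_slope.1 hd).mono_left
      (nhdsWithin_mono 0 fun t ht => ne_of_gt ht)
  have hbound : ∀ᶠ t in 𝓝[>] (0:ℝ), slope (fun t : ℝ => F (x + t • v)) 0 t ≤ F y - F x := by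
    filter_upwards [Ioo_mem_nhdsGT_of_mem (by norm_num : (0:ℝ) ∈ Ico 0 1)] with t ht
    obtain ⟨ht0, ht1⟩ := ht
    have hcvx := hF.2 (Set.mem_univ x) (Set.mem_univ y) (by linarith : (0:ℝ) ≤ 1 - t)
      (le_of_lt ht0) (by ring)
    have hxt : (1 - t) • x + t • y = x + t • v := by
      rw [hv]; module
    rw [hxt] at hcvx
    have h1 : F (x + t • v) ≤ (1 - t) * F x + t * F y := by
      simpa [smul_eq_mul] using hcvx
    rw [slope_def_field]
    simp only [zero_smul, add_zero, sub_zero]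
    rw [div_le_iff₀ ht0]
    nlinarith
  have := le_of_tendsto hslope hbound
  have hy1 : x + (1:ℝ) • v = y := by rw [hv]; module
  linarith [this]

lemma grad_fenchel_key {f : E → ℝ} (hf : Continuous f) (hc : Coercive1 f)
    {G y : E} (hG : HasGradientAt (fenchel f) G y) :
    ∀ x, f G + ⟪y, x - G⟫ ≤ f x := by
  obtain ⟨x₀, hx₀⟩ := exists_max hf hc y
  have heq := fenchel_eq_max hf hc hx₀
  have hsub : ∀ y', fenchel f y + ⟪y' - y, x₀⟫ ≤ fenchel f y' := by
    intro y'
    have h1 : ⟪y', x₀⟫ - f x₀ ≤ fenchel f y' := le_fenchel hf hc y' x₀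
    rw [heq, inner_sub_left]
    linarith
  have hGx : G = x₀ := grad_eq_of_subgrad hG hsub
  intro x
  have h2 := hx₀ x
  rw [← hGx] at h2
  rw [inner_sub_right]
  linarith

theorem stmt17 {n m : ℕ} (h : Fin m → EuclideanSpace ℝ (Fin n) → ℝ)
    (hsc : ∀ i, StrictConvexOn ℝ Set.univ (h i))
    (hdiff : ∀ i, Differentiable ℝ (h i))
    (hcoer : ∀ i, Coercive1 (h i))
    (g : Fin m → EuclideanSpace ℝ (Fin n) → EuclideanSpace ℝ (Fin n))
    (hg : ∀ i y, HasGradientAt (fenchel (h i)) (g i y) y)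
    (ystar : Fin m → EuclideanSpace ℝ (Fin n)) (hfeas : ∑ i, ystar i = 0) :
    ((∀ y : Fin m → EuclideanSpace ℝ (Fin n), (∑ i, y i) = 0 →
        ∑ i, fenchel (h i) (ystar i) ≤ ∑ i, fenchel (h i) (y i))
      ↔ ∀ i j, g i (ystar i) = g j (ystar j)) ∧
    ((∀ y : Fin m → EuclideanSpace ℝ (Fin n), (∑ i, y i) = 0 →
        ∑ i, fenchel (h i) (ystar i) ≤ ∑ i, fenchel (h i) (y i)) →
      ∀ i z, ∑ j, h j (g i (ystar i)) ≤ ∑ j, h j z) := by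
  have hcont : ∀ i, Continuous (h i) := fun i => (hdiff i).continuous
  -- forward direction of iff
  have fwd : (∀ y : Fin m → EuclideanSpace ℝ (Fin n), (∑ i, y i) = 0 →
        ∑ i, fenchel (h i) (ystar i) ≤ ∑ i, fenchel (h i) (y i)) →
      ∀ i j, g i (ystar i) = g j (ystar j) := by
    intro hopt i j
    by_cases hij : i = j
    · rw [hij]
    have key : ∀ v : (EuclideanSpace ℝ (Fin n)),
        ⟪g i (ystar i), v⟫ - ⟪g j (ystar j), v⟫ = 0 := by
      intro v
      set w : Fin m → EuclideanSpace ℝ (Fin n) :=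
        fun k => (if k = i then v else 0) - (if k = j then v else 0) with hw
      set ψ : ℝ → Fin m → EuclideanSpace ℝ (Fin n) :=
        fun t k => ystar k + t • w k with hψ
      have hψfeas : ∀ t, ∑ k, ψ t k = 0 := by
        intro t
        simp only [hψ, hw, Finset.sum_add_distrib, hfeas, smul_sub, smul_ite, smul_zero]
        rw [Finset.sum_sub_distrib]
        simp [Finset.sum_ite_eq']
      have hΦd : HasDerivAt (fun t : ℝ => ∑ k, fenchel (h k) (ψ t k))
          (∑ k, ⟪g k (ystar k), w k⟫) 0 :=
        HasDerivAt.fun_sum fun k _ => lineDeriv_of_grad (hg k (ystar k)) (w k)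
      have hmin : IsLocalMin (fun t : ℝ => ∑ k, fenchel (h k) (ψ t k)) 0 := by
        refine Filter.Eventually.of_forall fun t => ?_
        have h0 : ∀ k, ψ 0 k = ystar k := by intro k; simp [hψ]
        have := hopt (ψ t) (hψfeas t)
        simpa [h0] using this
      have hz := hmin.hasDerivAt_eq_zero hΦd
      rw [← hz]
      rw [Finset.sum_eq_add_of_mem i j (Finset.mem_univ i) (Finset.mem_univ j) hij ?_]
      · simp [hw, hij, inner_sub_right, Ne.symm hij]; ring
      · intro k _ hk
        simp [hw, hk.1, hk.2, inner_sub_right]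
    have : ⟪g i (ystar i) - g j (ystar j), g i (ystar i) - g j (ystar j)⟫ = 0 := by
      rw [inner_sub_left]
      rw [show ⟪g i (ystar i), g i (ystar i) - g j (ystar j)⟫ -
        ⟪g j (ystar j), g i (ystar i) - g j (ystar j)⟫ = _ from key _]
    exact sub_eq_zero.1 (inner_self_eq_zero.1 this)
  constructor
  · constructor
    · exact fwd
    · -- backward
      intro hgrads y hy
      have hineq : ∀ k, fenchel (h k) (ystar k) + ⟪g k (ystar k), y k - ystar k⟫ ≤
          fenchel (h k) (y k) := fun k =>
        convex_grad_ineq (fenchel_convexOn (hcont k) (hcoer k)) (hg k (ystar k)) (y k)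
      rcases isEmpty_or_nonempty (Fin m) with hm | hm
      · simp
      · set s := g (Classical.arbitrary (Fin m)) (ystar (Classical.arbitrary (Fin m))) with hs
        have hsum : ∑ k, ⟪g k (ystar k), y k - ystar k⟫ = 0 := by
          have : ∀ k, ⟪g k (ystar k), y k - ystar k⟫ = ⟪s, y k - ystar k⟫ := fun k => by
            rw [hgrads k (Classical.arbitrary (Fin m))]
          rw [Finset.sum_congr rfl fun k _ => this k, ← inner_sum]
          rw [Finset.sum_sub_distrib, hy, hfeas, sub_zero, inner_zero_right]
        calc ∑ k, fenchel (h k) (ystar k)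
            = ∑ k, (fenchel (h k) (ystar k) + ⟪g k (ystar k), y k - ystar k⟫) := by
              rw [Finset.sum_add_distrib, hsum, add_zero]
          _ ≤ ∑ k, fenchel (h k) (y k) := Finset.sum_le_sum fun k _ => hineq k
  · intro hopt i z
    have hgrads := fwd hopt
    have hkey : ∀ j : Fin m, h j (g i (ystar i)) + ⟪ystar j, z - g i (ystar i)⟫ ≤ h j z := by
      intro j
      have := grad_fenchel_key (hcont j) (hcoer j) (hg j (ystar j)) z
      rwa [hgrads j i] at this
    have hsum : ∑ j, ⟪ystar j, z - g i (ystar i)⟫ = 0 := by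
      rw [← sum_inner, hfeas, inner_zero_left]
    calc ∑ j, h j (g i (ystar i))
        = ∑ j, (h j (g i (ystar i)) + ⟪ystar j, z - g i (ystar i)⟫) := by
          rw [Finset.sum_add_distrib, hsum, add_zero]
      _ ≤ ∑ j, h j z := Finset.sum_le_sum fun j _ => hkey j
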